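/- Let m ≥ 3, n ≥ 2 and k ≥ 0. The number of proper colorings of the signed graph B_m^n with color set {−k,…,−1,0,1,…,k} equals (2k)^2 · γ_m(2k+1)^n. -/

import Mathlib

/-- Vertices of the book graph `B(m,n)`: `Sum.inl false` is `u`, `Sum.inl true` is `v`,
and `Sum.inr (i, j)` is the vertex `u_{j+1}^{i+1}`. -/
abbrev BookVertex (m n : ℕ) := Bool ⊕ (Fin n × Fin (m - 2))

/-- Adjacency relation of the book graph `B(m,n)`. -/
def bookAdj (m n : ℕ) : BookVertex m n → BookVertex m n → Prop
  | Sum.inl a, Sum.inl b => a ≠ b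
  | Sum.inl false, Sum.inr (_, j) => j.val = 0
  | Sum.inl true, Sum.inr (_, j) => j.val = m - 3
  | Sum.inr (_, j), Sum.inl false => j.val = 0
  | Sum.inr (_, j), Sum.inl true => j.val = m - 3
  | Sum.inr (i, j), Sum.inr (i', j') => i = i' ∧ (j.val + 1 = j'.val ∨ j'.val + 1 = j.val)

/-- The signature `σ_l` of `B(m,n)`: exactly the edges `u u_1^1, …, u u_1^l` are negative. -/
def sigmaL (m n l : ℕ) : BookVertex m n → BookVertex m n → ℤ
  | Sum.inl false, Sum.inr (i, j) => if j.val = 0 ∧ i.val < l then -1 else 1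
  | Sum.inr (i, j), Sum.inl false => if j.val = 0 ∧ i.val < l then -1 else 1
  | _, _ => 1

/-- The signature of `B^{uv}(m,n)`: exactly the edge `uv` is negative. -/
def sigmaUV (m n : ℕ) : BookVertex m n → BookVertex m n → ℤ
  | Sum.inl _, Sum.inl _ => -1
  | _, _ => 1

/-- `γ_m(x) = ∑_{i=0}^{m-2} (-1)^i (x-1)^{m-2-i}`. -/
def gammaP (m : ℕ) (x : ℤ) : ℤ := ∑ i ∈ Finset.range (m - 1), (-1) ^ i * (x - 1) ^ (m - 2 - i)

namespace S8
open Finset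

lemma gamma_two (x : ℤ) : gammaP 2 x = 1 := by simp [gammaP]

lemma gamma_succ (t : ℕ) (x : ℤ) : gammaP (t + 3) x = (x - 1) ^ (t + 1) - gammaP (t + 2) x := by
  unfold gammaP
  have h1 : t + 3 - 1 = (t + 1) + 1 := rfl
  rw [h1, Finset.sum_range_succ']
  have h2 : ∀ i ∈ Finset.range (t + 1),
      (-1 : ℤ) ^ (i + 1) * (x - 1) ^ (t + 3 - 2 - (i + 1)) =
      -((-1) ^ i * (x - 1) ^ (t + 2 - 2 - i)) := by
    intro i hi
    have : t + 3 - 2 - (i + 1) = t + 2 - 2 - i := by omega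
    rw [this, pow_succ]
    ring
  rw [Finset.sum_congr rfl h2, Finset.sum_neg_distrib]
  simp
  abel


lemma gamma_mul (t : ℕ) (x : ℤ) : x * gammaP (t + 2) x = (x - 1) ^ (t + 1) + (-1) ^ t := by
  induction t with
  | zero => rw [gamma_two]; ring
  | succ t ih =>
    have h := gamma_succ t x
    rw [show t + 1 + 2 = t + 3 from rfl, h]
    rw [mul_sub]
    rw [ih]
    ring


attribute [local instance] Classical.propDecidable
noncomputable section

def Sk (k : ℕ) : Finset ℤ := Finset.Icc (-(k : ℤ)) k

abbrev Col (k : ℕ) := {x : ℤ // x ∈ Sk k}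

lemma mem_Sk {k : ℕ} {x : ℤ} : x ∈ Sk k ↔ |x| ≤ (k : ℤ) := by simp [Sk, abs_le]

lemma card_Sk (k : ℕ) : (Sk k).card = 2 * k + 1 := by
  rw [Sk, Int.card_Icc]; omega

/-- `OC t a g` : the sequence `a, g 0, …, g (t-1)` is properly colored. -/
def OC (k : ℕ) : (t : ℕ) → ℤ → (Fin t → Col k) → Prop
  | 0, _, _ => True
  | t + 1, a, g => ((g 0 : ℤ) ≠ a) ∧ OC k t (g 0 : ℤ) (Fin.tail g)

/-- `lastV t a g` : last value of the sequence `a, g 0, …, g (t-1)`. -/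
def lastV (k : ℕ) : (t : ℕ) → ℤ → (Fin t → Col k) → ℤ
  | 0, a, _ => a
  | t + 1, _, g => lastV k t (g 0 : ℤ) (Fin.tail g)

def Page (k t : ℕ) (a b : ℤ) (g : Fin t → Col k) : Prop :=
  OC k t a g ∧ lastV k t a g ≠ b

lemma OC_iff (k : ℕ) : ∀ (t : ℕ) (a : ℤ) (g : Fin t → Col k),
    OC k t a g ↔ (∀ h : 0 < t, ((g ⟨0, h⟩ : Col k) : ℤ) ≠ a) ∧
      (∀ (j : ℕ) (h : j + 1 < t), (g ⟨j, by omega⟩ : ℤ) ≠ (g ⟨j + 1, h⟩ : ℤ)) := by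
  intro t
  induction t with
  | zero => intro a g; simp [OC]
  | succ t ih =>
    intro a g
    rw [OC, ih]
    constructor
    · rintro ⟨h0, h1, h2⟩
      refine ⟨fun h => ?_, fun j hj => ?_⟩
      · simpa using h0
      · match j, hj with
        | 0, hj =>
          rcases Nat.eq_zero_or_pos t with ht | ht
          · omega
          · have := h1 ht
            simp only [Fin.tail] at this
            convert this.symm using 3 <;> apply Fin.ext <;> simp
        | j + 1, hj =>
          have := h2 j (by omega)
          simp only [Fin.tail] at this
          convert this using 3 <;> apply Fin.ext <;> simp
    · rintro ⟨h0, h1⟩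
      refine ⟨by simpa using h0 (by omega), fun h => ?_, fun j hj => ?_⟩
      · have := h1 0 (by omega)
        simp only [Fin.tail]
        convert this.symm using 3 <;> apply Fin.ext <;> simp
      · have := h1 (j + 1) (by omega)
        simp only [Fin.tail]
        convert this using 3 <;> apply Fin.ext <;> simp

lemma lastV_eq (k : ℕ) : ∀ (t : ℕ) (h : 0 < t) (a : ℤ) (g : Fin t → Col k),
    lastV k t a g = (g ⟨t - 1, by omega⟩ : ℤ) := by
  intro t
  induction t with
  | zero => omega
  | succ t ih =>
    intro _ a g
    rw [lastV]
    rcases Nat.eq_zero_or_pos t with ht | ht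
    · subst ht
      rw [lastV]
      congr 2
    · rw [ih ht]
      simp only [Fin.tail]
      congr 2
      apply Fin.ext
      simp
      omega


def consEquiv {α : Type*} {t : ℕ} (Q : α → (Fin t → α) → Prop) :
    {g : Fin (t + 1) → α // Q (g 0) (Fin.tail g)} ≃ (x : α) × {g' : Fin t → α // Q x g'} where
  toFun g := ⟨g.1 0, ⟨Fin.tail g.1, g.2⟩⟩
  invFun p := ⟨Fin.cons p.1 p.2.1, by
    simp only [Fin.cons_zero, Fin.tail_cons]; exact p.2.2⟩
  left_inv g := by
    apply Subtype.ext
    exact Fin.cons_self_tail g.1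
  right_inv p := by
    rcases p with ⟨x, g, h⟩
    apply Sigma.ext <;> simp <;> rfl

lemma nat_card_sigma {ι : Type*} [Fintype ι] (f : ι → Type*) [∀ i, Fintype (f i)] :
    Nat.card ((i : ι) × f i) = ∑ i, Nat.card (f i) := by
  simp [Nat.card_eq_fintype_card, Fintype.card_sigma]

/-- number of proper colorings of a page -/
def N (k t : ℕ) (a b : ℤ) : ℕ := Nat.card {g : Fin t → Col k // Page k t a b g}

lemma N_rec (k t : ℕ) (a b : ℤ) :
    N k (t + 1) a b = ∑ x : Col k, if (x : ℤ) ≠ a then N k t (x : ℤ) b else 0 := by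
  have hiff : ∀ g : Fin (t + 1) → Col k,
      Page k (t + 1) a b g ↔
        (((g 0 : ℤ) ≠ a ∧ Page k t (g 0 : ℤ) b (Fin.tail g))) := by
    intro g
    rw [Page, OC, Page, lastV]
    tauto
  rw [N, Nat.card_congr (Equiv.subtypeEquivRight hiff),
    Nat.card_congr (consEquiv (α := Col k) (fun x g' => ((x : ℤ) ≠ a ∧ Page k t (x : ℤ) b g')))]
  rw [nat_card_sigma]
  congr 1
  funext x
  by_cases hx : (x : ℤ) ≠ a
  · rw [if_pos hx, N]
    exact Nat.card_congr (Equiv.subtypeEquivRight (by tauto))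
  · rw [if_neg hx]
    have : IsEmpty {g' : Fin t → Col k // (x : ℤ) ≠ a ∧ Page k t (x : ℤ) b g'} :=
      ⟨fun g => hx g.2.1⟩
    exact Nat.card_of_isEmpty


abbrev Pairs (k : ℕ) := {p : Col k × Col k // ((p.1 : ℤ) ≠ (p.2 : ℤ)) ∧ ((p.1 : ℤ) ≠ -(p.2 : ℤ))}

def bigEquiv (m n k : ℕ) (hm : 3 ≤ m) :
    {c : BookVertex m n → ℤ //
        (∀ x, |c x| ≤ (k : ℤ)) ∧
        (∀ x y, bookAdj m n x y →
          ¬((x = Sum.inl false ∧ y = Sum.inl true) ∨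
            (x = Sum.inl true ∧ y = Sum.inl false)) → c x ≠ c y) ∧
        c (Sum.inl false) ≠ c (Sum.inl true) ∧
        c (Sum.inl false) ≠ - c (Sum.inl true)} ≃
    (p : Pairs k) ×
      (Fin n → {g : Fin (m - 2) → Col k // Page k (m - 2) (p.1.1 : ℤ) (p.1.2 : ℤ) g}) where
  toFun := fun ⟨c, hb, hadj, h1, h2⟩ =>
    ⟨⟨(⟨c (Sum.inl false), mem_Sk.2 (hb _)⟩, ⟨c (Sum.inl true), mem_Sk.2 (hb _)⟩), h1, h2⟩,
     fun i => ⟨fun j => ⟨c (Sum.inr (i, j)), mem_Sk.2 (hb _)⟩, by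
      constructor
      · rw [OC_iff]
        constructor
        · intro h
          exact hadj (Sum.inr (i, ⟨0, h⟩)) (Sum.inl false) rfl (by simp)
        · intro j h
          exact hadj (Sum.inr (i, ⟨j, by omega⟩)) (Sum.inr (i, ⟨j + 1, h⟩))
            ⟨rfl, Or.inl rfl⟩ (by simp)
      · rw [lastV_eq k (m - 2) (by omega)]
        exact hadj (Sum.inr (i, ⟨m - 2 - 1, by omega⟩)) (Sum.inl true)
          (by show m - 2 - 1 = m - 3; omega) (by simp)⟩⟩
  invFun := fun ⟨⟨⟨a, b⟩, hp1, hp2⟩, pg⟩ =>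
    ⟨fun x => match x with
      | Sum.inl false => (a : ℤ)
      | Sum.inl true => (b : ℤ)
      | Sum.inr (i, j) => ((pg i).1 j : ℤ), by
      refine ⟨?_, ?_, hp1, hp2⟩
      · intro x
        match x with
        | Sum.inl false => exact mem_Sk.1 a.2
        | Sum.inl true => exact mem_Sk.1 b.2
        | Sum.inr (i, j) => exact mem_Sk.1 ((pg i).1 j).2
      · intro x y hxy hnot
        rcases x with (_ | _) | ⟨i, j⟩ <;> rcases y with (_ | _) | ⟨i', j'⟩
        · exact absurd rfl hxy
        · exact absurd (Or.inl ⟨rfl, rfl⟩) hnot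
        · -- inl false, inr
          have hj0 : j'.val = 0 := hxy
          have e : (⟨0, by omega⟩ : Fin (m - 2)) = j' := Fin.ext hj0.symm
          have h0 := ((OC_iff k _ _ _).1 (pg i').2.1).1 (by omega)
          rw [e] at h0
          exact h0.symm
        · exact absurd (Or.inr ⟨rfl, rfl⟩) hnot
        · exact absurd rfl hxy
        · -- inl true, inr
          have hj0 : j'.val = m - 3 := hxy
          have hlv := (pg i').2.2
          rw [lastV_eq k (m - 2) (by omega)] at hlv
          have e : (⟨m - 2 - 1, by omega⟩ : Fin (m - 2)) = j' := Fin.ext (show m - 2 - 1 = j'.val by omega)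
          rw [e] at hlv
          exact fun he => hlv he.symm
        · -- inr, inl false
          have hj0 : j.val = 0 := hxy
          have e : (⟨0, by omega⟩ : Fin (m - 2)) = j := Fin.ext hj0.symm
          have h0 := ((OC_iff k _ _ _).1 (pg i).2.1).1 (by omega)
          rw [e] at h0
          exact h0
        · -- inr, inl true
          have hj0 : j.val = m - 3 := hxy
          have hlv := (pg i).2.2
          rw [lastV_eq k (m - 2) (by omega)] at hlv
          have e : (⟨m - 2 - 1, by omega⟩ : Fin (m - 2)) = j := Fin.ext (show m - 2 - 1 = j.val by omega)
          rw [e] at hlv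
          exact hlv
        · -- inr, inr
          obtain ⟨hii, hjj⟩ : i = i' ∧ (j.val + 1 = j'.val ∨ j'.val + 1 = j.val) := hxy
          subst hii
          rcases hjj with h | h
          · have hc := ((OC_iff k _ _ _).1 (pg i).2.1).2 j.val (by omega)
            have e1 : (⟨j.val, by omega⟩ : Fin (m - 2)) = j := Fin.ext rfl
            have e2 : (⟨j.val + 1, by omega⟩ : Fin (m - 2)) = j' := Fin.ext h
            rw [e1, e2] at hc
            exact hc
          · have hc := ((OC_iff k _ _ _).1 (pg i).2.1).2 j'.val (by omega)
            have e1 : (⟨j'.val, by omega⟩ : Fin (m - 2)) = j' := Fin.ext rfl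
            have e2 : (⟨j'.val + 1, by omega⟩ : Fin (m - 2)) = j := Fin.ext h
            rw [e1, e2] at hc
            exact hc.symm⟩
  left_inv := fun ⟨c, hb, hadj, h1, h2⟩ => by
    apply Subtype.ext
    funext x
    rcases x with (_ | _) | ⟨i, j⟩ <;> rfl
  right_inv := fun ⟨⟨⟨a, b⟩, hp1, hp2⟩, pg⟩ => rfl

lemma N_eval (k : ℕ) : ∀ (t : ℕ) (a b : ℤ), a ∈ Sk k → b ∈ Sk k →
    (N k t a b : ℤ) = if a = b then gammaP (t + 2) (2 * (k : ℤ) + 1) - (-1) ^ t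
      else gammaP (t + 2) (2 * (k : ℤ) + 1) := by
  intro t
  induction t with
  | zero =>
    intro a b ha hb
    by_cases hab : a = b
    · rw [if_pos hab, gamma_two]
      have : IsEmpty {g : Fin 0 → Col k // Page k 0 a b g} := ⟨fun g => g.2.2 hab⟩
      rw [N, Nat.card_of_isEmpty]
      simp
    · rw [if_neg hab, gamma_two, N]
      have e : {g : Fin 0 → Col k // Page k 0 a b g} ≃ (Fin 0 → Col k) :=
        Equiv.subtypeUnivEquiv (fun g => ⟨trivial, hab⟩)
      rw [Nat.card_congr e, Nat.card_eq_fintype_card]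
      simp
  | succ t ih =>
    intro a b ha hb
    set lam : ℤ := 2 * (k : ℤ) + 1 with hlam
    set D : ℤ := gammaP (t + 2) lam with hD
    set E : ℤ := D - (-1) ^ t with hE
    have hN : (N k (t + 1) a b : ℤ) =
        ∑ y ∈ Sk k, if y = a then 0 else (if y = b then E else D) := by
      rw [N_rec, ← Finset.sum_coe_sort (Sk k)
        (fun y => if y = a then 0 else (if y = b then E else D))]
      push_cast
      apply Finset.sum_congr rfl
      intro x _
      by_cases hx : (x : ℤ) = a
      · simp [hx]
      · rw [if_pos hx, if_neg hx, ih (x : ℤ) b x.2 hb]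
    have h1 : ∀ y ∈ Sk k, (if y = a then 0 else (if y = b then E else D)) =
        ((D + if y = b then E - D else 0) - (if y = a then (if a = b then E else D) else 0)) := by
      intro y _
      split_ifs <;> first | linarith | omega
    rw [hN, Finset.sum_congr rfl h1, Finset.sum_sub_distrib, Finset.sum_add_distrib,
      Finset.sum_const, card_Sk, Finset.sum_ite_eq' (Sk k) b, Finset.sum_ite_eq' (Sk k) a,
      if_pos hb, if_pos ha]
    have hg : gammaP (t + 1 + 2) lam = (lam - 1) ^ (t + 1) - D := gamma_succ t lam
    have hmul : lam * D = (lam - 1) ^ (t + 1) + (-1) ^ t := gamma_mul t lam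
    rw [nsmul_eq_mul, hg]
    by_cases hab : a = b
    · rw [if_pos hab, if_pos hab]
      push_cast
      linear_combination hmul
    · rw [if_neg hab, if_neg hab]
      push_cast
      linear_combination hmul


lemma card_pairs (k : ℕ) : (Nat.card (Pairs k) : ℤ) = (2 * (k : ℤ)) ^ 2 := by
  rw [Nat.card_congr (Equiv.subtypeProdEquivSigmaSubtype
    (fun (a b : Col k) => (a : ℤ) ≠ (b : ℤ) ∧ (a : ℤ) ≠ -(b : ℤ))), nat_card_sigma]
  push_cast
  have inner : ∀ a : Col k,
      (Nat.card {b : Col k // (a : ℤ) ≠ (b : ℤ) ∧ (a : ℤ) ≠ -(b : ℤ)} : ℤ)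
        = 2 * (k : ℤ) - 1 + (if (a : ℤ) = 0 then 1 else 0) := by
    intro a
    rw [Nat.card_eq_fintype_card, Fintype.card_subtype, Finset.card_filter]
    push_cast
    rw [Finset.sum_coe_sort (Sk k) (fun y => if (a : ℤ) ≠ y ∧ (a : ℤ) ≠ -y then (1 : ℤ) else 0)]
    have hpt : ∀ y ∈ Sk k, (if (a : ℤ) ≠ y ∧ (a : ℤ) ≠ -y then (1 : ℤ) else 0) =
        1 - (if y = (a : ℤ) then 1 else 0) - (if y = -(a : ℤ) then 1 else 0)
          + (if y = (a : ℤ) then (if (a : ℤ) = -(a : ℤ) then (1 : ℤ) else 0) else 0) := by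
      intro y _
      split_ifs <;> omega
    rw [Finset.sum_congr rfl hpt, Finset.sum_add_distrib, Finset.sum_sub_distrib,
      Finset.sum_sub_distrib, Finset.sum_const, card_Sk,
      Finset.sum_ite_eq' (Sk k) ((a : ℤ)), Finset.sum_ite_eq' (Sk k) (-(a : ℤ)),
      Finset.sum_ite_eq' (Sk k) ((a : ℤ))]
    have ha : (a : ℤ) ∈ Sk k := a.2
    have hna : -(a : ℤ) ∈ Sk k := by
      rw [mem_Sk] at *
      simpa using ha
    rw [if_pos ha, if_pos hna, if_pos ha, nsmul_eq_mul]
    have heq : ((a : ℤ) = -(a : ℤ)) ↔ ((a : ℤ) = 0) := by omega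
    by_cases h0 : (a : ℤ) = 0 <;> simp only [h0, heq, if_pos, if_neg, if_true, if_false] <;>
      push_cast <;> ring_nf <;> simp [heq, h0] <;> ring
  rw [Finset.sum_congr rfl (fun a _ => inner a),
    Finset.sum_coe_sort (Sk k) (fun y => 2 * (k : ℤ) - 1 + (if y = 0 then 1 else 0)),
    Finset.sum_add_distrib, Finset.sum_const, card_Sk, Finset.sum_ite_eq' (Sk k) (0 : ℤ),
    if_pos (by rw [mem_Sk]; simp), nsmul_eq_mul]
  push_cast
  ring

end
end S8


/-- The number of proper colorings of `B_m^n` (the book graph `B(m,n)` with the edge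
`uv` replaced by a digon with one positive and one negative edge) with color set
`{-k, …, -1, 0, 1, …, k}` is `(2k)^2 · γ_m(2k+1)^n`. -/
theorem statement8 (m n : ℕ) (hm : 3 ≤ m) (hn : 2 ≤ n) (k : ℕ) :
    (Nat.card {c : BookVertex m n → ℤ //
        (∀ x, |c x| ≤ (k : ℤ)) ∧
        (∀ x y, bookAdj m n x y →
          ¬((x = Sum.inl false ∧ y = Sum.inl true) ∨
            (x = Sum.inl true ∧ y = Sum.inl false)) → c x ≠ c y) ∧
        c (Sum.inl false) ≠ c (Sum.inl true) ∧
        c (Sum.inl false) ≠ - c (Sum.inl true)} : ℤ) =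
      (2 * (k : ℤ)) ^ 2 * gammaP m (2 * (k : ℤ) + 1) ^ n := by
  classical
  rw [Nat.card_congr (S8.bigEquiv m n k hm), S8.nat_card_sigma]
  have hm2 : m - 2 + 2 = m := by omega
  have hstep : ∀ p : S8.Pairs k,
      ((Nat.card (Fin n → {g : Fin (m - 2) → S8.Col k //
          S8.Page k (m - 2) (p.1.1 : ℤ) (p.1.2 : ℤ) g}) : ℤ))
        = gammaP m (2 * (k : ℤ) + 1) ^ n := by
    intro p
    rw [Nat.card_fun, show Nat.card (Fin n) = n by simp]
    push_cast
    rw [show (Nat.card {g : Fin (m - 2) → S8.Col k //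
        S8.Page k (m - 2) (p.1.1 : ℤ) (p.1.2 : ℤ) g}) = S8.N k (m - 2) (p.1.1 : ℤ) (p.1.2 : ℤ)
        from rfl]
    rw [S8.N_eval k (m - 2) _ _ p.1.1.2 p.1.2.2, if_neg p.2.1, hm2]
  push_cast
  rw [Finset.sum_congr rfl (fun p _ => hstep p), Finset.sum_const, Finset.card_univ,
    ← Nat.card_eq_fintype_card, nsmul_eq_mul, S8.card_pairs]
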